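/- Let X ⊆ ℝ^m and Y ⊆ ℝ^n be nonempty compact convex sets, A a q×n and B a q×m real matrix, b ∈ ℝ^q. Let f : ℝ^n × ℝ^m → ℝ ∪ {+∞} be proper convex lower semicontinuous and g : ℝ^n × ℝ^m → ℝ^p have convex lower semicontinuous components, with f and g differentiable on Y × X. Define 𝒬(x) = inf { f(y, x) : y ∈ Y, Ay + Bx = b, g(y, x) ≤ 0 }, the Lagrangian L_x(y, λ, μ) = f(y, x) + λᵀ(Ay + Bx − b) + μᵀ g(y, x), and the dual function θ_x(λ, μ) = inf_{y ∈ Y} L_x(y, λ, μ). Assume the Slater condition (H5): for every x ∈ X there exists y_x (in the relative interior of Y when Y is not polyhedral) with Ay_x + Bx = b and g(y_x, x) < 0 componentwise. Fix x̄ ∈ X and ε ≥ 0; let ŷ be feasible for the problem defining 𝒬(x̄) with f(ŷ, x̄) ≤ 𝒬(x̄) + ε, and let (λ̂, μ̂) with μ̂ ≥ 0 satisfy θ_{x̄}(λ̂, μ̂) ≥ 𝒬(x̄) − ε. Set η = max_{y ∈ Y} ⟨∇_y L_{x̄}(ŷ, λ̂, μ̂), ŷ − y⟩. Then the affine function C(x)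 = L_{x̄}(ŷ, λ̂, μ̂) − η + ⟨∇_x L_{x̄}(ŷ, λ̂, μ̂), x − x̄⟩, where ∇_x L_{x̄}(ŷ, λ̂, μ̂) = ∇_x f(ŷ, x̄) + Bᵀλ̂ + Σ_{i=1}^p μ̂_i ∇_x g_i(ŷ, x̄), satisfies 𝒬(x) ≥ C(x) for every x ∈ X, and 𝒬(x̄) − C(x̄) ≤ ε + η. -/

import Mathlib

open scoped RealInnerProductSpace Matrix
noncomputable section

/-- `ℝ^k` with the Euclidean norm. -/
abbrev E (k : ℕ) := EuclideanSpace ℝ (Fin k)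

/-- Reinterpret a plain vector of `ℝ^k` as an element of Euclidean space. -/
def toE {k : ℕ} (v : Fin k → ℝ) : E k := WithLp.toLp 2 v

/-- Convexity for extended-real-valued functions on a real vector space. -/
def EConvexOn {V : Type*} [AddCommGroup V] [Module ℝ V] (f : V → EReal) : Prop :=
  ∀ x y : V, ∀ t ∈ Set.Ioo (0:ℝ) 1,
    f (t • x + (1 - t) • y) ≤ (t : EReal) * f x + ((1 - t : ℝ) : EReal) * f y

/-- A polyhedral set: a finite intersection of closed half-spaces. -/
def IsPolyhedral {k : ℕ} (s : Set (E k)) : Prop :=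
  ∃ (r : ℕ) (c : Fin r → E k) (d : Fin r → ℝ), s = {x : E k | ∀ i, ⟪c i, x⟫ ≤ d i}

/-- The value function `𝒬(x) = inf { f(y, x) : y ∈ Y, Ay + Bx = b, g(y, x) ≤ 0 }`. -/
def Qvar {n m q p : ℕ} (Y : Set (E n)) (A : Matrix (Fin q) (Fin n) ℝ)
    (B : Matrix (Fin q) (Fin m) ℝ) (b : Fin q → ℝ)
    (f : E n × E m → EReal) (g : Fin p → E n × E m → EReal) (x : E m) : EReal :=
  ⨅ (y : E n) (_ : y ∈ Y) (_ : A.mulVec y + B.mulVec x = b)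
    (_ : ∀ i, g i (y, x) ≤ (0 : EReal)), f (y, x)

/-- The dual function `θ_x(λ, μ) = inf_{y ∈ Y} { f(y,x) + λᵀ(Ay + Bx − b) + μᵀg(y,x) }`. -/
def thetaVar {n m q p : ℕ} (Y : Set (E n)) (A : Matrix (Fin q) (Fin n) ℝ)
    (B : Matrix (Fin q) (Fin m) ℝ) (b : Fin q → ℝ)
    (f : E n × E m → EReal) (g : Fin p → E n × E m → EReal)
    (x : E m) (lam : E q) (mu : E p) : EReal :=
  ⨅ (y : E n) (_ : y ∈ Y),
    (f (y, x) + (((lam : Fin q → ℝ) ⬝ᵥ (A.mulVec y + B.mulVec x - b) : ℝ) : EReal)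
      + ∑ i, (mu i : EReal) * g i (y, x))

/-- The (real-valued) Lagrangian `L_x(y, λ, μ) = f(y,x) + λᵀ(Ay + Bx − b) + μᵀg(y,x)`,
expressed through the real representations `fr`, `gr` of `f`, `g` on `Y × X`. -/
def lagr {n m q p : ℕ} (A : Matrix (Fin q) (Fin n) ℝ)
    (B : Matrix (Fin q) (Fin m) ℝ) (b : Fin q → ℝ)
    (fr : E n × E m → ℝ) (gr : Fin p → E n × E m → ℝ)
    (x : E m) (y : E n) (lam : E q) (mu : E p) : ℝ :=
  fr (y, x) + (lam : Fin q → ℝ) ⬝ᵥ (A.mulVec y + B.mulVec x - b)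
    + ∑ i, mu i * gr i (y, x)

lemma grad_inner {k : ℕ} (h : E k → ℝ) (x v : E k) :
    ⟪gradient h x, v⟫ = fderiv ℝ h x v :=
  InnerProductSpace.toDual_symm_apply

lemma inner_dot {k : ℕ} (u v : E k) : ⟪u, v⟫ = (u : Fin k → ℝ) ⬝ᵥ (v : Fin k → ℝ) := by
  simp [PiLp.inner_apply, RCLike.inner_apply, dotProduct, mul_comm]

lemma ereal_coe_fsum {α : Type*} (s : Finset α) (f : α → ℝ) :
    ((∑ i ∈ s, f i : ℝ) : EReal) = ∑ i ∈ s, ((f i : ℝ) : EReal) :=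
  map_sum (⟨⟨Real.toEReal, EReal.coe_zero⟩, EReal.coe_add⟩ : ℝ →+ EReal) f s

lemma support_ineq {F : Type*} [NormedAddCommGroup F] [NormedSpace ℝ F] {S : Set F}
    {h : F → ℝ} {D : F →L[ℝ] ℝ} {z₀ : F}
    (hc : ∀ u ∈ S, ∀ v ∈ S, ∀ t ∈ Set.Ioo (0:ℝ) 1,
      h (t • u + (1 - t) • v) ≤ t * h u + (1 - t) * h v)
    (hz₀ : z₀ ∈ S) (hd : HasFDerivAt h D z₀) {z : F} (hz : z ∈ S) :
    h z₀ + D (z - z₀) ≤ h z := by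
  set d := z - z₀ with hdd
  have hline : HasDerivAt (fun t : ℝ => z₀ + t • d) d 0 := by
    simpa using ((hasDerivAt_id (0:ℝ)).smul_const d).const_add z₀
  have hφ : HasDerivAt (fun t : ℝ => h (z₀ + t • d)) (D d) 0 := by
    have hd' : HasFDerivAt h D ((fun t : ℝ => z₀ + t • d) 0) := by simpa using hd
    exact hd'.comp_hasDerivAt 0 hline
  have htend : Filter.Tendsto (slope (fun t : ℝ => h (z₀ + t • d)) 0)
      (nhdsWithin 0 (Set.Ioi (0:ℝ))) (nhds (D d)) :=
    (hasDerivAt_iff_tendsto_slope.mp hφ).mono_left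
      (nhdsWithin_mono 0 (fun x hx => ne_of_gt hx))
  have hbound : ∀ᶠ t in nhdsWithin 0 (Set.Ioi (0:ℝ)),
      slope (fun t : ℝ => h (z₀ + t • d)) 0 t ≤ h z - h z₀ := by
    filter_upwards [Ioo_mem_nhdsGT (zero_lt_one)] with t ht
    have hcomb : h (t • z + (1 - t) • z₀) ≤ t * h z + (1 - t) * h z₀ := hc z hz z₀ hz₀ t ht
    have heq : z₀ + t • d = t • z + (1 - t) • z₀ := by
      rw [hdd]; module
    rw [slope_def_field]
    simp only [sub_zero, heq, zero_smul, add_zero]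
    rw [div_le_iff₀ ht.1]
    nlinarith [hcomb]
  have := le_of_tendsto htend hbound
  linarith

lemma econvex_real {V : Type*} [AddCommGroup V] [Module ℝ V] {S : Set V}
    (hS : Convex ℝ S) {h : V → EReal} {hr : V → ℝ}
    (hc : EConvexOn h) (heq : ∀ z ∈ S, h z = ((hr z : ℝ) : EReal)) :
    ∀ u ∈ S, ∀ v ∈ S, ∀ t ∈ Set.Ioo (0:ℝ) 1,
      hr (t • u + (1 - t) • v) ≤ t * hr u + (1 - t) * hr v := by
  intro u hu v hv t ht
  have hcomb : t • u + (1 - t) • v ∈ S :=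
    hS hu hv (le_of_lt ht.1) (by linarith [ht.2]) (by ring)
  have h1 := hc u v t ht
  rw [heq _ hcomb, heq _ hu, heq _ hv] at h1
  have h2 : ((hr (t • u + (1 - t) • v) : ℝ) : EReal)
      ≤ ((t * hr u + (1 - t) * hr v : ℝ) : EReal) := by
    rw [EReal.coe_add, EReal.coe_mul, EReal.coe_mul]; exact h1
  exact_mod_cast h2


/-- Inexact cut with variable feasible set (Proposition 2.7 of Guigues, ISDDP): given an
`ε`-optimal primal solution `ŷ` and an `ε`-optimal dual solution `(λ̂, μ̂)` at `x̄`, with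
`η = max_{y ∈ Y} ⟨∇_y L_{x̄}(ŷ, λ̂, μ̂), ŷ − y⟩`, the affine function
`C(x) = L_{x̄}(ŷ, λ̂, μ̂) − η + ⟨∇_x L_{x̄}(ŷ, λ̂, μ̂), x − x̄⟩` is a cut for `𝒬` at `x̄`
and `𝒬(x̄) − C(x̄) ≤ ε + η`. -/
theorem inexact_cut_variable_feasible_set
    {n m q p : ℕ} (X : Set (E m)) (Y : Set (E n))
    (hXne : X.Nonempty) (hXcp : IsCompact X) (hXcv : Convex ℝ X)
    (hYne : Y.Nonempty) (hYcp : IsCompact Y) (hYcv : Convex ℝ Y)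
    (A : Matrix (Fin q) (Fin n) ℝ) (B : Matrix (Fin q) (Fin m) ℝ) (b : Fin q → ℝ)
    -- (H1): f proper convex lower semicontinuous
    (f : E n × E m → EReal)
    (hfbot : ∀ pt, f pt ≠ ⊥) (hfproper : ∃ pt, f pt ≠ ⊤)
    (hfconv : EConvexOn f) (hflsc : LowerSemicontinuous f)
    -- (H2): each gᵢ convex lower semicontinuous (with values in ℝ ∪ {+∞})
    (g : Fin p → E n × E m → EReal)
    (hgbot : ∀ i pt, g i pt ≠ ⊥)
    (hgconv : ∀ i, EConvexOn (g i)) (hglsc : ∀ i, LowerSemicontinuous (g i))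
    -- f and g are differentiable (real-valued, with differentiable representations) on Y × X
    (fr : E n × E m → ℝ) (gr : Fin p → E n × E m → ℝ)
    (hfr : ∀ pt ∈ Y ×ˢ X, f pt = ((fr pt : ℝ) : EReal))
    (hgr : ∀ i, ∀ pt ∈ Y ×ˢ X, g i pt = ((gr i pt : ℝ) : EReal))
    (hfrdiff : ∀ pt ∈ Y ×ˢ X, DifferentiableAt ℝ fr pt)
    (hgrdiff : ∀ i, ∀ pt ∈ Y ×ˢ X, DifferentiableAt ℝ (gr i) pt)
    -- (H5): Slater-type constraint qualification
    (hslater : ∀ x ∈ X, ∃ y ∈ Y, (¬ IsPolyhedral Y → y ∈ intrinsicInterior ℝ Y) ∧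
      A.mulVec y + B.mulVec x = b ∧ ∀ i, g i (y, x) < (0 : EReal))
    (xb : E m) (hxb : xb ∈ X)
    (ε : ℝ) (hε : 0 ≤ ε)
    -- ŷ: ε-optimal feasible primal solution at x̄
    (yh : E n) (hyhY : yh ∈ Y) (hyhlin : A.mulVec yh + B.mulVec xb = b)
    (hyhg : ∀ i, g i (yh, xb) ≤ (0 : EReal))
    (hyheps : ((fr (yh, xb) : ℝ) : EReal) ≤ Qvar Y A B b f g xb + (ε : EReal))
    -- (λ̂, μ̂): ε-optimal feasible dual solution at x̄
    (lamh : E q) (muh : E p) (hmuh : ∀ i, 0 ≤ muh i)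
    (hdualeps : Qvar Y A B b f g xb - (ε : EReal) ≤ thetaVar Y A B b f g xb lamh muh)
    -- η = max_{y ∈ Y} ⟨∇_y L_{x̄}(ŷ, λ̂, μ̂), ŷ − y⟩
    (η : ℝ)
    (hη : IsGreatest
      ((fun y : E n =>
          ⟪gradient (fun y' => lagr A B b fr gr xb y' lamh muh) yh, yh - y⟫) '' Y) η) :
    (∀ x ∈ X,
      ((lagr A B b fr gr xb yh lamh muh - η
          + ⟪gradient (fun x' => fr (yh, x')) xb + toE (Bᵀ.mulVec lamh)
              + ∑ i, muh i • gradient (fun x' => gr i (yh, x')) xb, x - xb⟫ : ℝ) : EReal)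
        ≤ Qvar Y A B b f g x) ∧
    Qvar Y A B b f g xb ≤
      ((lagr A B b fr gr xb yh lamh muh - η
          + ⟪gradient (fun x' => fr (yh, x')) xb + toE (Bᵀ.mulVec lamh)
              + ∑ i, muh i • gradient (fun x' => gr i (yh, x')) xb, xb - xb⟫
          + (ε + η) : ℝ) : EReal) := by
  have hz0S : (yh, xb) ∈ Y ×ˢ X := Set.mk_mem_prod hyhY hxb
  have hSconv : Convex ℝ (Y ×ˢ X) := hYcv.prod hXcv
  -- the real Lagrangian on the product space
  set L : E n × E m → ℝ := fun pt =>
    fr pt + (lamh : Fin q → ℝ) ⬝ᵥ (A.mulVec pt.1 + B.mulVec pt.2 - b)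
      + ∑ i, muh i * gr i pt with hLdef
  have hLag : ∀ (yy : E n) (xx : E m), lagr A B b fr gr xx yy lamh muh = L (yy, xx) := by
    intro yy xx; simp only [hLdef, lagr]
  -- convexity of L on Y ×ˢ X
  have hfrc := econvex_real hSconv hfconv hfr
  have hgrc : ∀ i, ∀ u ∈ Y ×ˢ X, ∀ v ∈ Y ×ˢ X, ∀ t ∈ Set.Ioo (0:ℝ) 1,
      gr i (t • u + (1 - t) • v) ≤ t * gr i u + (1 - t) * gr i v :=
    fun i => econvex_real hSconv (hgconv i) (hgr i)
  have hLconv : ∀ u ∈ Y ×ˢ X, ∀ v ∈ Y ×ˢ X, ∀ t ∈ Set.Ioo (0:ℝ) 1,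
      L (t • u + (1 - t) • v) ≤ t * L u + (1 - t) * L v := by
    intro u hu v hv t ht
    have h1 := hfrc u hu v hv t ht
    have h3 : ∑ i, muh i * gr i (t • u + (1 - t) • v)
        ≤ t * (∑ i, muh i * gr i u) + (1 - t) * (∑ i, muh i * gr i v) := by
      rw [Finset.mul_sum, Finset.mul_sum, ← Finset.sum_add_distrib]
      refine Finset.sum_le_sum fun i _ => ?_
      have h2 := mul_le_mul_of_nonneg_left (hgrc i u hu v hv t ht) (hmuh i)
      nlinarith [h2]
    have h4' : ∀ (y1 y2 : Fin n → ℝ) (x1 x2 : Fin m → ℝ),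
        (lamh : Fin q → ℝ) ⬝ᵥ (A.mulVec (t • y1 + (1 - t) • y2)
          + B.mulVec (t • x1 + (1 - t) • x2) - b)
        = t * ((lamh : Fin q → ℝ) ⬝ᵥ (A.mulVec y1 + B.mulVec x1 - b))
          + (1 - t) * ((lamh : Fin q → ℝ) ⬝ᵥ (A.mulVec y2 + B.mulVec x2 - b)) := by
      intro y1 y2 x1 x2
      simp only [Matrix.mulVec_add, Matrix.mulVec_smul, dotProduct_sub,
        dotProduct_add, dotProduct_smul, smul_eq_mul]
      ring
    have h4 : (lamh : Fin q → ℝ) ⬝ᵥ (A.mulVec (t • u + (1 - t) • v).1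
          + B.mulVec (t • u + (1 - t) • v).2 - b)
        = t * ((lamh : Fin q → ℝ) ⬝ᵥ (A.mulVec u.1 + B.mulVec u.2 - b))
          + (1 - t) * ((lamh : Fin q → ℝ) ⬝ᵥ (A.mulVec v.1 + B.mulVec v.2 - b)) := by
      simp only [Prod.fst_add, Prod.snd_add, Prod.smul_fst, Prod.smul_snd]
      exact h4' u.1 v.1 u.2 v.2
    simp only [hLdef]
    nlinarith [h1, h3, h4]
  -- the derivative
  set a' : E n := toE (Aᵀ.mulVec lamh) with ha'
  set c' : E m := toE (Bᵀ.mulVec lamh) with hc'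
  set Dlin : (E n × E m) →L[ℝ] ℝ :=
    (innerSL ℝ a').comp (ContinuousLinearMap.fst ℝ (E n) (E m))
      + (innerSL ℝ c').comp (ContinuousLinearMap.snd ℝ (E n) (E m)) with hDlin
  have hDlinApp : ∀ vw : E n × E m, Dlin vw = ⟪a', vw.1⟫ + ⟪c', vw.2⟫ := by
    intro vw; simp [hDlin]
  have hlinpt : ∀ pt : E n × E m,
      (lamh : Fin q → ℝ) ⬝ᵥ (A.mulVec pt.1 + B.mulVec pt.2 - b)
        = ⟪a', pt.1⟫ + ⟪c', pt.2⟫ - (lamh : Fin q → ℝ) ⬝ᵥ b := by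
    intro pt
    rw [inner_dot, inner_dot, ha', hc']
    simp only [toE, WithLp.ofLp_toLp, Matrix.mulVec_transpose, ← Matrix.dotProduct_mulVec,
      dotProduct_sub, dotProduct_add]
  have hfd : HasFDerivAt fr (fderiv ℝ fr (yh, xb)) (yh, xb) := (hfrdiff _ hz0S).hasFDerivAt
  have hgd : ∀ i, HasFDerivAt (gr i) (fderiv ℝ (gr i) (yh, xb)) (yh, xb) :=
    fun i => (hgrdiff i _ hz0S).hasFDerivAt
  have hlind : HasFDerivAt (fun pt : E n × E m =>
      (lamh : Fin q → ℝ) ⬝ᵥ (A.mulVec pt.1 + B.mulVec pt.2 - b)) Dlin (yh, xb) := by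
    have heq : (fun pt : E n × E m =>
        (lamh : Fin q → ℝ) ⬝ᵥ (A.mulVec pt.1 + B.mulVec pt.2 - b))
        = fun pt => Dlin pt - (lamh : Fin q → ℝ) ⬝ᵥ b := by
      funext pt; rw [hlinpt pt, hDlinApp pt]
    rw [heq]
    exact Dlin.hasFDerivAt.sub_const _
  have hsumd : HasFDerivAt (fun pt => ∑ i, muh i * gr i pt)
      (∑ i, muh i • fderiv ℝ (gr i) (yh, xb)) (yh, xb) :=
    HasFDerivAt.fun_sum fun i _ => (hgd i).const_mul (muh i)
  set D : (E n × E m) →L[ℝ] ℝ :=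
    fderiv ℝ fr (yh, xb) + Dlin + ∑ i, muh i • fderiv ℝ (gr i) (yh, xb) with hD
  have hLd : HasFDerivAt L D (yh, xb) := by
    rw [hLdef, hD]; exact (hfd.add hlind).add hsumd
  have hDapp : ∀ vw : E n × E m, D vw = fderiv ℝ fr (yh, xb) vw
      + (⟪a', vw.1⟫ + ⟪c', vw.2⟫) + ∑ i, muh i * fderiv ℝ (gr i) (yh, xb) vw := by
    intro vw
    rw [hD]
    simp [ContinuousLinearMap.add_apply, ContinuousLinearMap.sum_apply,
      ContinuousLinearMap.smul_apply, hDlinApp vw, smul_eq_mul]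
  -- partial derivative identifications
  have hy_part : ∀ v : E n, ⟪gradient (fun y' => L (y', xb)) yh, v⟫ = D (v, 0) := by
    intro v
    rw [grad_inner]
    have hcomp : HasFDerivAt (fun y' : E n => L (y', xb))
        (D.comp (ContinuousLinearMap.inl ℝ (E n) (E m))) yh :=
      HasFDerivAt.comp (f := fun e : E n => (e, xb)) yh hLd (hasFDerivAt_prodMk_left (𝕜 := ℝ) yh xb)
    rw [hcomp.fderiv]
    simp
  have hx_fr : ∀ w : E m, ⟪gradient (fun x' => fr (yh, x')) xb, w⟫
      = fderiv ℝ fr (yh, xb) (0, w) := by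
    intro w
    rw [grad_inner]
    have hcomp : HasFDerivAt (fun x' : E m => fr (yh, x'))
        ((fderiv ℝ fr (yh, xb)).comp (ContinuousLinearMap.inr ℝ (E n) (E m))) xb :=
      hfd.comp xb (hasFDerivAt_prodMk_right yh xb)
    rw [hcomp.fderiv]
    simp
  have hx_gr : ∀ i, ∀ w : E m, ⟪gradient (fun x' => gr i (yh, x')) xb, w⟫
      = fderiv ℝ (gr i) (yh, xb) (0, w) := by
    intro i w
    rw [grad_inner]
    have hcomp : HasFDerivAt (fun x' : E m => gr i (yh, x'))
        ((fderiv ℝ (gr i) (yh, xb)).comp (ContinuousLinearMap.inr ℝ (E n) (E m))) xb :=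
      (hgd i).comp xb (hasFDerivAt_prodMk_right yh xb)
    rw [hcomp.fderiv]
    simp
  have hx_part : ∀ w : E m,
      ⟪gradient (fun x' => fr (yh, x')) xb + c'
        + ∑ i, muh i • gradient (fun x' => gr i (yh, x')) xb, w⟫ = D (0, w) := by
    intro w
    rw [inner_add_left, inner_add_left, sum_inner, hx_fr w]
    have hterm : ∀ i ∈ Finset.univ, ⟪muh i • gradient (fun x' => gr i (yh, x')) xb, w⟫
        = muh i * fderiv ℝ (gr i) (yh, xb) (0, w) := by
      intro i _; rw [real_inner_smul_left, hx_gr i w]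
    rw [Finset.sum_congr rfl hterm, hDapp]
    simp
  have hηY : ∀ y ∈ Y, D (yh - y, 0) ≤ η := by
    intro y hy
    have h0 := hη.2 (Set.mem_image_of_mem _ hy)
    rw [show (fun y' => lagr A B b fr gr xb y' lamh muh) = (fun y' => L (y', xb)) from
      funext fun y' => hLag y' xb] at h0
    rw [hy_part] at h0
    exact h0
  have hkey : ∀ z ∈ Y ×ˢ X, L (yh, xb) + D (z - (yh, xb)) ≤ L z :=
    fun z hz => support_ineq hLconv hz0S hLd hz
  constructor
  · -- the cut inequality
    intro x hx
    unfold Qvar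
    refine le_iInf fun y => le_iInf fun hy => le_iInf fun hlin => le_iInf fun hg => ?_
    have hyx : (y, x) ∈ Y ×ˢ X := Set.mk_mem_prod hy hx
    rw [hfr _ hyx, EReal.coe_le_coe_iff]
    have h1 := hkey (y, x) hyx
    have hsplit : D ((y, x) - (yh, xb)) = D (y - yh, 0) + D (0, x - xb) := by
      rw [← map_add]
      congr 1
      simp [Prod.ext_iff]
    have hfeas : L (y, x) ≤ fr (y, x) := by
      simp only [hLdef]
      have hzero : A.mulVec y + B.mulVec x - b = 0 := sub_eq_zero_of_eq hlin
      have hsum : ∑ i, muh i * gr i (y, x) ≤ 0 := by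
        refine Finset.sum_nonpos fun i _ => mul_nonpos_of_nonneg_of_nonpos (hmuh i) ?_
        have hgi := hg i
        rw [hgr i _ hyx] at hgi
        exact_mod_cast hgi
      simp only [hzero, dotProduct_zero]
      linarith
    have hD1 : -η ≤ D (y - yh, 0) := by
      have h2 := hηY y hy
      have h3 : D (y - yh, 0) = - D (yh - y, 0) := by
        rw [← map_neg]
        congr 1
        rw [Prod.neg_mk, neg_sub, neg_zero]
      linarith
    have hD2 : D (0, x - xb) = ⟪gradient (fun x' => fr (yh, x')) xb + c'
        + ∑ i, muh i • gradient (fun x' => gr i (yh, x')) xb, x - xb⟫ :=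
      (hx_part (x - xb)).symm
    rw [hLag yh xb]
    rw [hD2] at hsplit
    linarith
  · -- the tightness inequality
    have hQle : Qvar Y A B b f g xb ≤ ((fr (yh, xb) : ℝ) : EReal) := by
      have : Qvar Y A B b f g xb ≤ f (yh, xb) := by
        unfold Qvar
        exact iInf_le_of_le yh (iInf_le_of_le hyhY (iInf_le_of_le hyhlin
          (iInf_le_of_le hyhg le_rfl)))
      rw [hfr _ hz0S] at this
      exact this
    rcases eq_or_ne (Qvar Y A B b f g xb) ⊥ with hbot | hbot
    · rw [hbot]; exact bot_le
    have htop : Qvar Y A B b f g xb ≠ ⊤ := ne_top_of_le_ne_top (EReal.coe_ne_top _) hQle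
    obtain ⟨r, hr⟩ : ∃ r : ℝ, Qvar Y A B b f g xb = (r : EReal) :=
      ⟨_, (EReal.coe_toReal htop hbot).symm⟩
    have hθle : thetaVar Y A B b f g xb lamh muh ≤ ((L (yh, xb) : ℝ) : EReal) := by
      unfold thetaVar
      refine le_trans (iInf_le_of_le yh (iInf_le_of_le hyhY le_rfl)) ?_
      rw [hfr _ hz0S]
      have hgsum : (∑ i, (muh i : EReal) * g i (yh, xb))
          = ((∑ i, muh i * gr i (yh, xb) : ℝ) : EReal) := by
        rw [ereal_coe_fsum]
        refine Finset.sum_congr rfl fun i _ => ?_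
        rw [hgr i _ hz0S, ← EReal.coe_mul]
      rw [hgsum]
      refine le_of_eq ?_
      rw [← EReal.coe_add, ← EReal.coe_add]
    have hchain : Qvar Y A B b f g xb - (ε : EReal) ≤ ((L (yh, xb) : ℝ) : EReal) :=
      le_trans hdualeps hθle
    rw [hr] at hchain ⊢
    rw [show ((r : EReal) - (ε : EReal)) = ((r - ε : ℝ) : EReal) from (EReal.coe_sub r ε).symm]
      at hchain
    have hre : r - ε ≤ L (yh, xb) := by exact_mod_cast hchain
    rw [hLag yh xb]
    have hz : ⟪gradient (fun x' => fr (yh, x')) xb + c'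
        + ∑ i, muh i • gradient (fun x' => gr i (yh, x')) xb, xb - xb⟫ = (0:ℝ) := by
      rw [sub_self, inner_zero_right]
    refine EReal.coe_le_coe_iff.mpr ?_
    rw [hz]
    linarith
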